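/- Let X and Y be independent random variables, each uniformly distributed on a 4-element alphabet (equivalently, each consisting of two i.i.d. uniform bits), and let Z = 1 if X = Y and Z = 0 otherwise. Let M be any finite-valued random variable on the same probability space with I(X ; Y | M) = 0, H(Z | (M, X)) = 0 and H(Z | (M, Y)) = 0. Then I(X ; M | Y) + I(Y ; M | X) ≥ (5/2) · log 2. -/

import Mathlib

open MeasureTheory ProbabilityTheory Real
open scoped ENNReal

/-- The probability that the random variable `X` takes the value `x`. -/
noncomputable def pm {Ω S : Type*} [MeasurableSpace Ω] (μ : Measure Ω) (X : Ω → S) (x : S) : ℝ :=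
  (μ (X ⁻¹' {x})).toReal

/-- Shannon entropy (with natural logarithm) of a finite-valued random variable. -/
noncomputable def entH {Ω S : Type*} [MeasurableSpace Ω] [Fintype S]
    (μ : Measure Ω) (X : Ω → S) : ℝ :=
  ∑ x : S, Real.negMulLog (pm μ X x)

/-- Conditional entropy `H(X | Y)`. -/
noncomputable def condEnt {Ω S T : Type*} [MeasurableSpace Ω] [Fintype S] [Fintype T]
    (μ : Measure Ω) (X : Ω → S) (Y : Ω → T) : ℝ :=
  entH μ (fun ω => (X ω, Y ω)) - entH μ Y

/-- Mutual information `I(X ; Y)`. -/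
noncomputable def mutInf {Ω S T : Type*} [MeasurableSpace Ω] [Fintype S] [Fintype T]
    (μ : Measure Ω) (X : Ω → S) (Y : Ω → T) : ℝ :=
  entH μ X + entH μ Y - entH μ (fun ω => (X ω, Y ω))

/-- Conditional mutual information `I(X ; Y | Z)`. -/
noncomputable def condMutInf {Ω S T U : Type*} [MeasurableSpace Ω] [Fintype S] [Fintype T]
    [Fintype U] (μ : Measure Ω) (X : Ω → S) (Y : Ω → T) (Z : Ω → U) : ℝ :=
  entH μ (fun ω => (X ω, Z ω)) + entH μ (fun ω => (Y ω, Z ω))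
    - entH μ (fun ω => ((X ω, Y ω), Z ω)) - entH μ Z

section Lemmas
namespace EqLB
open Finset


/-- Summing a measure over the fibers of a finite-valued map. -/
lemma sum_fiber {Ω B : Type*} [MeasurableSpace Ω] (μ : Measure Ω) [IsFiniteMeasure μ]
    [Fintype B] (W : Ω → B) (hW : ∀ b : B, MeasurableSet (W ⁻¹' {b})) (s : Set Ω) :
    ∑ b : B, (μ (W ⁻¹' {b} ∩ s)).toReal = (μ s).toReal := by
  classical
  have h1 : ∀ b : B, μ.restrict s (W ⁻¹' {b}) = μ (W ⁻¹' {b} ∩ s) := fun b =>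
    Measure.restrict_apply (hW b)
  have h2 : ∑ b : B, μ.restrict s (W ⁻¹' {b})
      = μ.restrict s (W ⁻¹' ((Finset.univ : Finset B) : Set B)) :=
    sum_measure_preimage_singleton _ (fun b _ => hW b)
  have h3 : (W ⁻¹' ((Finset.univ : Finset B) : Set B)) = Set.univ := by simp
  rw [h3, Measure.restrict_apply_univ] at h2
  calc ∑ b : B, (μ (W ⁻¹' {b} ∩ s)).toReal
      = ∑ b : B, (μ.restrict s (W ⁻¹' {b})).toReal := by simp [h1]
    _ = (∑ b : B, μ.restrict s (W ⁻¹' {b})).toReal :=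
        (ENNReal.toReal_sum fun b _ => measure_ne_top _ _).symm
    _ = (μ s).toReal := by rw [h2]




lemma log_ge_one_sub_inv {u : ℝ} (hu : 0 < u) : 1 - 1/u ≤ Real.log u := by
  have h := Real.log_le_sub_one_of_pos (show (0:ℝ) < 1/u by positivity)
  rw [Real.log_div one_ne_zero (ne_of_gt hu), Real.log_one] at h
  linarith

lemma log_gt_one_sub_inv {u : ℝ} (hu : 0 < u) (hne : u ≠ 1) : 1 - 1/u < Real.log u := by
  have h := Real.log_lt_sub_one_of_pos (show (0:ℝ) < 1/u by positivity)
    (by simpa [eq_comm, div_eq_one_iff_eq (ne_of_gt hu)] using hne)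
  rw [Real.log_div one_ne_zero (ne_of_gt hu), Real.log_one] at h
  linarith

lemma nML_add_le {a b : ℝ} (ha : 0 ≤ a) (hb : 0 ≤ b) :
    negMulLog (a + b) ≤ negMulLog a + negMulLog b := by
  rcases eq_or_lt_of_le ha with h | ha
  · simp [← h]
  rcases eq_or_lt_of_le hb with h | hb
  · simp [← h]
  have h1 : Real.log a ≤ Real.log (a + b) := Real.log_le_log (by linarith) (by linarith)
  have h2 : Real.log b ≤ Real.log (a + b) := Real.log_le_log (by linarith) (by linarith)
  simp only [negMulLog, neg_mul]
  nlinarith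

lemma nML_add_lt {a b : ℝ} (ha : 0 < a) (hb : 0 < b) :
    negMulLog (a + b) < negMulLog a + negMulLog b := by
  have h1 : Real.log a < Real.log (a + b) := Real.log_lt_log ha (by linarith)
  have h2 : Real.log b < Real.log (a + b) := Real.log_lt_log hb (by linarith)
  simp only [negMulLog, neg_mul]
  nlinarith

/-- Entropy is at most log of the support size. -/
lemma ent_le_log_card {A : Type*} [Fintype A] (s : Finset A) (p : A → ℝ)
    (h0 : ∀ x ∈ s, 0 ≤ p x) (h1 : ∑ x ∈ s, p x = 1) :
    ∑ x ∈ s, negMulLog (p x) ≤ Real.log s.card := by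
  have hne : s.Nonempty := by
    by_contra h
    rw [Finset.not_nonempty_iff_eq_empty] at h
    simp [h] at h1
  have hcard : (0:ℝ) < s.card := by exact_mod_cast Finset.card_pos.2 hne
  have key : ∀ x ∈ s, negMulLog (p x) ≤ (s.card : ℝ)⁻¹ - p x + p x * Real.log s.card := by
    intro x hx
    rcases eq_or_lt_of_le (h0 x hx) with h | h
    · rw [← h]; simp only [negMulLog_zero, sub_zero, zero_mul, add_zero]; positivity
    · -- p x > 0 : negMulLog p = -p log p ≤ 1/n - p + p log n
      have hlog := log_ge_one_sub_inv (show (0:ℝ) < (s.card : ℝ) * p x by positivity)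
      rw [Real.log_mul (ne_of_gt hcard) (ne_of_gt h)] at hlog
      have : 1/((s.card:ℝ) * p x) = (s.card:ℝ)⁻¹ / p x := by
        field_simp
      rw [this] at hlog
      simp only [negMulLog, neg_mul]
      have := mul_le_mul_of_nonneg_left hlog (le_of_lt h)
      rw [mul_sub, mul_div_cancel₀ _ (ne_of_gt h)] at this
      nlinarith
  calc ∑ x ∈ s, negMulLog (p x) ≤ ∑ x ∈ s, ((s.card : ℝ)⁻¹ - p x + p x * Real.log s.card) :=
        Finset.sum_le_sum key
    _ = Real.log s.card := by
        rw [Finset.sum_add_distrib, Finset.sum_sub_distrib, ← Finset.sum_mul, h1,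
          Finset.sum_const, nsmul_eq_mul]
        field_simp
        ring


open Finset

variable {A : Type*} [Fintype A]

/-- Gibbs: nonnegativity of mutual information and its equality case, unnormalized. -/
lemma gibbs (q : A → A → ℝ) (hq0 : ∀ x y, 0 ≤ q x y) :
    0 ≤ (∑ x, negMulLog (∑ y, q x y)) + (∑ y, negMulLog (∑ x, q x y))
      - (∑ x, ∑ y, negMulLog (q x y)) - negMulLog (∑ x, ∑ y, q x y) ∧
    ((∑ x, negMulLog (∑ y, q x y)) + (∑ y, negMulLog (∑ x, q x y))
      - (∑ x, ∑ y, negMulLog (q x y)) - negMulLog (∑ x, ∑ y, q x y) ≤ 0 →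
      ∀ x y, q x y * (∑ x', ∑ y', q x' y') = (∑ y', q x y') * (∑ x', q x' y)) := by
  classical
  set qx : A → ℝ := fun x => ∑ y, q x y with hqx
  set qy : A → ℝ := fun y => ∑ x, q x y with hqy
  set w : ℝ := ∑ x, ∑ y, q x y with hw
  have hqx0 : ∀ x, 0 ≤ qx x := fun x => Finset.sum_nonneg fun y _ => hq0 x y
  have hqy0 : ∀ y, 0 ≤ qy y := fun y => Finset.sum_nonneg fun x _ => hq0 x y
  have hw0 : 0 ≤ w := Finset.sum_nonneg fun x _ => hqx0 x
  have hwqx : ∑ x, qx x = w := rfl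
  have hwqy : ∑ y, qy y = w := by rw [hw, Finset.sum_comm]
  rcases eq_or_lt_of_le hw0 with hwz | hwpos
  · -- w = 0 : everything vanishes
    have hq : ∀ x y, q x y = 0 := by
      intro x y
      have h1 : ∀ x ∈ (univ : Finset A), (0:ℝ) ≤ qx x := fun x _ => hqx0 x
      have := (Finset.sum_eq_zero_iff_of_nonneg h1).1 hwz.symm x (mem_univ x)
      have h2 : ∀ y ∈ (univ : Finset A), (0:ℝ) ≤ q x y := fun y _ => hq0 x y
      exact (Finset.sum_eq_zero_iff_of_nonneg h2).1 this y (mem_univ y)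
    have hwz' : w = 0 := hwz.symm
    constructor
    · simp [hqx, hqy, hq, hwz']
    · intro _ x y
      simp [hq, Finset.sum_const_zero]
  -- main case w > 0
  set t : A → A → ℝ := fun x y =>
    q x y * (Real.log (q x y) + Real.log w - Real.log (qx x) - Real.log (qy y)) with ht
  set s : A → A → ℝ := fun x y => q x y - qx x * qy y / w with hs
  have hE : (∑ x, negMulLog (qx x)) + (∑ y, negMulLog (qy y))
      - (∑ x, ∑ y, negMulLog (q x y)) - negMulLog w = ∑ x, ∑ y, t x y := by
    have e1 : ∑ x, negMulLog (qx x) = ∑ x, ∑ y, (-(q x y * Real.log (qx x))) := by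
      refine Finset.sum_congr rfl fun x _ => ?_
      rw [negMulLog, neg_mul, hqx]
      rw [Finset.sum_mul, ← Finset.sum_neg_distrib]
    have e2 : ∑ y, negMulLog (qy y) = ∑ x, ∑ y, (-(q x y * Real.log (qy y))) := by
      rw [Finset.sum_comm]
      refine Finset.sum_congr rfl fun y _ => ?_
      rw [negMulLog, neg_mul, hqy]
      rw [Finset.sum_mul, ← Finset.sum_neg_distrib]
    have e4 : negMulLog w = ∑ x, ∑ y, (-(q x y * Real.log w)) := by
      rw [negMulLog, neg_mul, hw]
      rw [Finset.sum_mul, ← Finset.sum_neg_distrib]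
      refine Finset.sum_congr rfl fun x _ => ?_
      rw [Finset.sum_mul, ← Finset.sum_neg_distrib]
    have key : ∑ x, ∑ y, t x y = (∑ x, ∑ y, (-(q x y * Real.log (qx x))))
        + (∑ x, ∑ y, (-(q x y * Real.log (qy y))))
        - (∑ x, ∑ y, negMulLog (q x y)) - (∑ x, ∑ y, (-(q x y * Real.log w))) := by
      simp only [← Finset.sum_add_distrib, ← Finset.sum_sub_distrib]
      refine Finset.sum_congr rfl fun x _ => Finset.sum_congr rfl fun y _ => ?_
      rw [ht, negMulLog]; ring
    rw [e1, e2, e4, key]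
  have hts : ∀ x y, s x y ≤ t x y ∧ (t x y ≤ s x y → q x y * w = qx x * qy y) := by
    intro x y
    rcases eq_or_lt_of_le (hq0 x y) with hz | hpos
    · have hz' : q x y = 0 := hz.symm
      have hnn : 0 ≤ qx x * qy y / w := div_nonneg (mul_nonneg (hqx0 x) (hqy0 y)) hw0
      constructor
      · simp only [hs, ht, hz', zero_mul, zero_sub]
        linarith
      · intro h
        simp only [hs, ht, hz', zero_mul, zero_sub] at h
        have h0 : qx x * qy y / w = 0 := le_antisymm (by linarith) hnn
        rcases div_eq_zero_iff.1 h0 with h' | h'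
        · rw [hz', zero_mul, h']
        · exact absurd h' (ne_of_gt hwpos)
    · have hqxp : 0 < qx x := lt_of_lt_of_le hpos (Finset.single_le_sum (fun y _ => hq0 x y) (mem_univ y))
      have hqyp : 0 < qy y := lt_of_lt_of_le hpos (Finset.single_le_sum (fun x _ => hq0 x y) (mem_univ x))
      set u : ℝ := q x y * w / (qx x * qy y) with hu
      have hup : 0 < u := div_pos (mul_pos hpos hwpos) (mul_pos hqxp hqyp)
      have htu : t x y = q x y * Real.log u := by
        rw [ht, hu, Real.log_div (ne_of_gt (mul_pos hpos hwpos)) (ne_of_gt (mul_pos hqxp hqyp)),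
          Real.log_mul (ne_of_gt hpos) (ne_of_gt hwpos),
          Real.log_mul (ne_of_gt hqxp) (ne_of_gt hqyp)]
        ring
      have hinv : q x y * (1/u) = qx x * qy y / w := by
        rw [hu]
        field_simp
      constructor
      · have := log_ge_one_sub_inv hup
        have h2 := mul_le_mul_of_nonneg_left this (le_of_lt hpos)
        rw [mul_sub, hinv, mul_one] at h2
        rw [htu, hs]; linarith
      · intro h
        by_contra hne
        have hune : u ≠ 1 := by
          rw [hu]; intro hc
          rw [div_eq_one_iff_eq (ne_of_gt (mul_pos hqxp hqyp))] at hc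
          exact hne hc
        have := log_gt_one_sub_inv hup hune
        have h2 := mul_lt_mul_of_pos_left this hpos
        rw [mul_sub, hinv, mul_one] at h2
        rw [htu, hs] at h
        linarith
  have hsum_s : ∑ x, ∑ y, s x y = 0 := by
    simp only [hs]
    rw [Finset.sum_comm (s := univ) (t := univ) (f := fun x y => q x y - qx x * qy y / w)]
    have : ∀ y, ∑ x, (q x y - qx x * qy y / w) = qy y - qy y := by
      intro y
      rw [Finset.sum_sub_distrib]
      congr 1
      rw [← Finset.sum_div, ← Finset.sum_mul, hwqx]
      field_simp
    simp [this]
  constructor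
  · rw [hE, ← hsum_s]
    exact Finset.sum_le_sum fun x _ => Finset.sum_le_sum fun y _ => (hts x y).1
  · intro hle x y
    rw [hE] at hle
    have hz : ∑ x, ∑ y, (t x y - s x y) = 0 := by
      have hsplit : ∑ x, ∑ y, (t x y - s x y) = (∑ x, ∑ y, t x y) - ∑ x, ∑ y, s x y := by
        simp only [Finset.sum_sub_distrib]
      have hge : 0 ≤ ∑ x, ∑ y, (t x y - s x y) :=
        Finset.sum_nonneg fun x _ => Finset.sum_nonneg fun y _ => by
          have := (hts x y).1; linarith
      have hle' : ∑ x, ∑ y, (t x y - s x y) ≤ 0 := by rw [hsplit, hsum_s]; linarith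
      linarith
    have hnn : ∀ x ∈ (univ : Finset A), (0:ℝ) ≤ ∑ y, (t x y - s x y) :=
      fun x _ => Finset.sum_nonneg fun y _ => by have := (hts x y).1; linarith
    have h1 := (Finset.sum_eq_zero_iff_of_nonneg hnn).1 hz x (mem_univ x)
    have hnn2 : ∀ y ∈ (univ : Finset A), (0:ℝ) ≤ t x y - s x y :=
      fun y _ => by have := (hts x y).1; linarith
    have h2 := (Finset.sum_eq_zero_iff_of_nonneg hnn2).1 h1 y (mem_univ y)
    exact (hts x y).2 (by linarith)


/-- Zero conditional entropy of a binary split forces determinism. -/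
lemma extract_det' {I : Type*} [Fintype I] (d e : I → ℝ) (h0d : ∀ i, 0 ≤ d i)
    (h0e : ∀ i, 0 ≤ e i)
    (hsum : ∑ i, (negMulLog (d i) + negMulLog (e i) - negMulLog (d i + e i)) ≤ 0) :
    ∀ i, d i = 0 ∨ e i = 0 := by
  classical
  have hterm : ∀ i, 0 ≤ negMulLog (d i) + negMulLog (e i) - negMulLog (d i + e i) := by
    intro i
    have := nML_add_le (h0d i) (h0e i)
    linarith
  have hz : ∀ i ∈ (univ : Finset I),
      negMulLog (d i) + negMulLog (e i) - negMulLog (d i + e i) = 0 := by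
    refine (Finset.sum_eq_zero_iff_of_nonneg fun i _ => hterm i).1 ?_
    exact le_antisymm hsum (Finset.sum_nonneg fun i _ => hterm i)
  intro i
  by_contra hcon
  push_neg at hcon
  have hd : 0 < d i := lt_of_le_of_ne (h0d i) (Ne.symm hcon.1)
  have he : 0 < e i := lt_of_le_of_ne (h0e i) (Ne.symm hcon.2)
  have h1 := nML_add_lt hd he
  have h2 := hz i (mem_univ i)
  linarith

/-- Per-message core bound. -/
lemma core {A : Type*} [Fintype A] [DecidableEq A] (hA : Fintype.card A = 4)
    (q : A → A → ℝ) (hq0 : ∀ x y, 0 ≤ q x y)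
    (hfac : ∀ x y, q x y * (∑ x', ∑ y', q x' y') = (∑ y', q x y') * (∑ x', q x' y))
    (hdX : ∀ x, q x x = 0 ∨ q x x = ∑ y, q x y)
    (hdY : ∀ y, q y y = 0 ∨ q y y = ∑ x, q x y) :
    2 * (∑ x, ∑ y, negMulLog (q x y)) - (∑ x, negMulLog (∑ y, q x y))
      - (∑ y, negMulLog (∑ x, q x y))
      ≤ 2 * Real.log 2 * ((∑ x, ∑ y, q x y) - ∑ x, q x x) := by
  classical
  set qx : A → ℝ := fun x => ∑ y, q x y with hqx
  set qy : A → ℝ := fun y => ∑ x, q x y with hqy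
  set w : ℝ := ∑ x, ∑ y, q x y with hw
  have hqx0 : ∀ x, 0 ≤ qx x := fun x => Finset.sum_nonneg fun y _ => hq0 x y
  have hqy0 : ∀ y, 0 ≤ qy y := fun y => Finset.sum_nonneg fun x _ => hq0 x y
  have hw0 : 0 ≤ w := Finset.sum_nonneg fun x _ => hqx0 x
  have hwqx : ∑ x, qx x = w := rfl
  have hwqy : ∑ y, qy y = w := by rw [hw, Finset.sum_comm]
  rcases eq_or_lt_of_le hw0 with hwz | hwpos
  · have hq : ∀ x y, q x y = 0 := by
      intro x y
      have h1 : ∀ x ∈ (univ : Finset A), (0:ℝ) ≤ qx x := fun x _ => hqx0 x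
      have := (Finset.sum_eq_zero_iff_of_nonneg h1).1 hwz.symm x (mem_univ x)
      have h2 : ∀ y ∈ (univ : Finset A), (0:ℝ) ≤ q x y := fun y _ => hq0 x y
      exact (Finset.sum_eq_zero_iff_of_nonneg h2).1 this y (mem_univ y)
    simp [hqx, hqy, hq, ← hwz]
  -- normalize
  set a : A → ℝ := fun x => qx x / w with ha
  set b : A → ℝ := fun y => qy y / w with hb
  have ha0 : ∀ x, 0 ≤ a x := fun x => div_nonneg (hqx0 x) hw0
  have hb0 : ∀ y, 0 ≤ b y := fun y => div_nonneg (hqy0 y) hw0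
  have hsa : ∑ x, a x = 1 := by
    rw [ha]; rw [← Finset.sum_div, hwqx, div_self (ne_of_gt hwpos)]
  have hsb : ∑ y, b y = 1 := by
    rw [hb]; rw [← Finset.sum_div, hwqy, div_self (ne_of_gt hwpos)]
  have hwne : w ≠ 0 := ne_of_gt hwpos
  have hfac' : ∀ x y, q x y = w * (a x * b y) := by
    intro x y
    have h2 : q x y * w = qx x * qy y := hfac x y
    have h3 : q x y = qx x * qy y / w := (eq_div_iff hwne).mpr h2
    have h4 : a x = qx x / w := rfl
    have h5 : b y = qy y / w := rfl
    rw [h3, h4, h5]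
    field_simp
  have hax : ∀ x, qx x = w * a x := by
    intro x
    have h4 : a x = qx x / w := rfl
    rw [h4]
    field_simp
  have hby : ∀ y, qy y = w * b y := by
    intro y
    have h5 : b y = qy y / w := rfl
    rw [h5]
    field_simp
  set Ha : ℝ := ∑ x, negMulLog (a x) with hHa
  set Hb : ℝ := ∑ y, negMulLog (b y) with hHb
  have hterm : ∀ x y, negMulLog (q x y)
      = (a x * negMulLog w + w * negMulLog (a x)) * b y + (w * a x) * negMulLog (b y) := by
    intro x y
    rw [hfac' x y, negMulLog_mul, negMulLog_mul]
    ring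
  have perx : ∀ x, ∑ y, negMulLog (q x y)
      = a x * (negMulLog w + w * Hb) + w * negMulLog (a x) := by
    intro x
    simp only [hterm]
    rw [Finset.sum_add_distrib, ← Finset.mul_sum, ← Finset.mul_sum, hsb, ← hHb]
    ring
  have e3 : ∑ x, ∑ y, negMulLog (q x y) = negMulLog w + w * Ha + w * Hb := by
    simp only [perx]
    rw [Finset.sum_add_distrib, ← Finset.sum_mul, hsa, ← Finset.mul_sum, ← hHa]
    ring
  have eMX : ∑ x, negMulLog (qx x) = negMulLog w + w * Ha := by
    have hx2 : ∀ x, negMulLog (qx x) = a x * negMulLog w + w * negMulLog (a x) := by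
      intro x; rw [hax x, negMulLog_mul]
    simp only [hx2]
    rw [Finset.sum_add_distrib, ← Finset.sum_mul, hsa, ← Finset.mul_sum, ← hHa]
    ring
  have eMY : ∑ y, negMulLog (qy y) = negMulLog w + w * Hb := by
    have hy2 : ∀ y, negMulLog (qy y) = b y * negMulLog w + w * negMulLog (b y) := by
      intro y; rw [hby y, negMulLog_mul]
    simp only [hy2]
    rw [Finset.sum_add_distrib, ← Finset.sum_mul, hsb, ← Finset.mul_sum, ← hHb]
    ring
  have ediag : ∑ x, q x x = w * ∑ x, a x * b x := by
    rw [Finset.mul_sum]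
    exact Finset.sum_congr rfl fun x _ => hfac' x x
  set Sab : ℝ := ∑ x, a x * b x with hSab
  have key : Ha + Hb ≤ 2 * Real.log 2 * (1 - Sab) := by
    by_cases hall : ∀ x, a x * b x = 0
    · -- disjoint supports
      have hS0 : Sab = 0 := by rw [hSab]; exact Finset.sum_eq_zero fun x _ => hall x
      set S : Finset A := univ.filter (fun x => a x ≠ 0) with hSdef
      set Tt : Finset A := univ.filter (fun y => b y ≠ 0) with hTdef
      have hHaS : Ha = ∑ x ∈ S, negMulLog (a x) := by
        rw [hHa]
        refine (Finset.sum_filter_of_ne fun x _ hne => ?_).symm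
        intro hax0
        rw [hax0] at hne
        simp at hne
      have hHbT : Hb = ∑ y ∈ Tt, negMulLog (b y) := by
        rw [hHb]
        refine (Finset.sum_filter_of_ne fun y _ hne => ?_).symm
        intro hby0
        rw [hby0] at hne
        simp at hne
      have hsaS : ∑ x ∈ S, a x = 1 := by
        rw [← hsa]
        exact Finset.sum_filter_of_ne fun x _ hne => hne
      have hsbT : ∑ y ∈ Tt, b y = 1 := by
        rw [← hsb]
        exact Finset.sum_filter_of_ne fun y _ hne => hne
      have hHale : Ha ≤ Real.log S.card := by
        rw [hHaS]; exact ent_le_log_card S a (fun x _ => ha0 x) hsaS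
      have hHble : Hb ≤ Real.log Tt.card := by
        rw [hHbT]; exact ent_le_log_card Tt b (fun y _ => hb0 y) hsbT
      have hdisj : Disjoint S Tt := by
        rw [Finset.disjoint_left]
        intro x hxS hxT
        rw [hSdef, Finset.mem_filter] at hxS
        rw [hTdef, Finset.mem_filter] at hxT
        rcases mul_eq_zero.1 (hall x) with h | h
        · exact hxS.2 h
        · exact hxT.2 h
      have hcards : S.card + Tt.card ≤ 4 := by
        rw [← Finset.card_union_of_disjoint hdisj]
        calc (S ∪ Tt).card ≤ (univ : Finset A).card := Finset.card_le_univ _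
          _ = 4 := by rw [Finset.card_univ, hA]
      have hSne : S.Nonempty := by
        by_contra h
        rw [Finset.not_nonempty_iff_eq_empty] at h
        rw [h] at hsaS
        simp at hsaS
      have hTne : Tt.Nonempty := by
        by_contra h
        rw [Finset.not_nonempty_iff_eq_empty] at h
        rw [h] at hsbT
        simp at hsbT
      have hs1 : (1:ℝ) ≤ S.card := by exact_mod_cast Finset.card_pos.2 hSne
      have ht1 : (1:ℝ) ≤ Tt.card := by exact_mod_cast Finset.card_pos.2 hTne
      have hsum4 : (S.card : ℝ) + Tt.card ≤ 4 := by exact_mod_cast hcards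
      have hst4 : (S.card : ℝ) * Tt.card ≤ 4 := by
        nlinarith [sq_nonneg ((S.card : ℝ) - Tt.card)]
      have hlog : Real.log S.card + Real.log Tt.card ≤ 2 * Real.log 2 := by
        rw [← Real.log_mul (x := (S.card : ℝ)) (y := (Tt.card : ℝ)) (ne_of_gt (by linarith)) (ne_of_gt (by linarith))]
        calc Real.log ((S.card : ℝ) * Tt.card) ≤ Real.log 4 :=
              Real.log_le_log (by nlinarith) hst4
          _ = 2 * Real.log 2 := by
              rw [show (4:ℝ) = 2^2 by norm_num, Real.log_pow]; norm_num
      rw [hS0]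
      calc Ha + Hb ≤ Real.log S.card + Real.log Tt.card := add_le_add hHale hHble
        _ ≤ 2 * Real.log 2 := hlog
        _ = 2 * Real.log 2 * (1 - 0) := by ring
    · -- diagonal singleton
      push_neg at hall
      obtain ⟨x0, hx0⟩ := hall
      have hax0 : a x0 ≠ 0 := fun h => hx0 (by rw [h, zero_mul])
      have hbx0 : b x0 ≠ 0 := fun h => hx0 (by rw [h, mul_zero])
      have hqd : q x0 x0 ≠ 0 := by
        rw [hfac' x0 x0]
        exact mul_ne_zero hwne hx0
      have hb1 : b x0 = 1 := by
        rcases hdX x0 with h | h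
        · exact absurd h hqd
        · have h' : q x0 x0 = qx x0 := h
          have h2 : w * (a x0 * b x0) = w * a x0 := by
            rw [← hfac' x0 x0, h', hax x0]
          have h3 : a x0 * b x0 = a x0 := mul_left_cancel₀ hwne h2
          exact mul_left_cancel₀ hax0 (h3.trans (mul_one _).symm)
      have ha1 : a x0 = 1 := by
        rcases hdY x0 with h | h
        · exact absurd h hqd
        · have h' : q x0 x0 = qy x0 := h
          have h2 : w * (a x0 * b x0) = w * b x0 := by
            rw [← hfac' x0 x0, h', hby x0]
          have h3 : a x0 * b x0 = b x0 := mul_left_cancel₀ hwne h2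
          exact mul_right_cancel₀ hbx0 (h3.trans (one_mul _).symm)
      have haz : ∀ x, x ≠ x0 → a x = 0 := by
        intro x hx
        have h4 : a x0 + ∑ x ∈ univ.erase x0, a x = 1 :=
          (Finset.add_sum_erase univ a (mem_univ x0)).trans hsa
        have herase : ∑ x ∈ univ.erase x0, a x = 0 := by rw [ha1] at h4; linarith
        exact (Finset.sum_eq_zero_iff_of_nonneg fun x _ => ha0 x).1 herase x
          (Finset.mem_erase.2 ⟨hx, mem_univ x⟩)
      have hbz : ∀ y, y ≠ x0 → b y = 0 := by
        intro y hy
        have h4 : b x0 + ∑ y ∈ univ.erase x0, b y = 1 :=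
          (Finset.add_sum_erase univ b (mem_univ x0)).trans hsb
        have herase : ∑ y ∈ univ.erase x0, b y = 0 := by rw [hb1] at h4; linarith
        exact (Finset.sum_eq_zero_iff_of_nonneg fun y _ => hb0 y).1 herase y
          (Finset.mem_erase.2 ⟨hy, mem_univ y⟩)
      have hHa0 : Ha = 0 := by
        rw [hHa, ← Finset.add_sum_erase _ _ (mem_univ x0), ha1, negMulLog_one]
        have hz : ∑ x ∈ univ.erase x0, negMulLog (a x) = 0 :=
          Finset.sum_eq_zero fun x hx => by
            rw [haz x (Finset.mem_erase.1 hx).1, negMulLog_zero]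
        rw [hz, add_zero]
      have hHb0 : Hb = 0 := by
        rw [hHb, ← Finset.add_sum_erase _ _ (mem_univ x0), hb1, negMulLog_one]
        have hz : ∑ y ∈ univ.erase x0, negMulLog (b y) = 0 :=
          Finset.sum_eq_zero fun y hy => by
            rw [hbz y (Finset.mem_erase.1 hy).1, negMulLog_zero]
        rw [hz, add_zero]
      have hSab1 : Sab = 1 := by
        rw [hSab, ← Finset.add_sum_erase _ _ (mem_univ x0), ha1, hb1]
        have hz : ∑ x ∈ univ.erase x0, a x * b x = 0 :=
          Finset.sum_eq_zero fun x hx => by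
            rw [haz x (Finset.mem_erase.1 hx).1, zero_mul]
        rw [hz, add_zero, one_mul]
      rw [hHa0, hHb0, hSab1]
      simp
  rw [e3, eMX, eMY, ediag]
  calc 2 * (negMulLog w + w * Ha + w * Hb) - (negMulLog w + w * Ha) - (negMulLog w + w * Hb)
      = w * (Ha + Hb) := by ring
    _ ≤ w * (2 * Real.log 2 * (1 - Sab)) := mul_le_mul_of_nonneg_left key hw0
    _ = 2 * Real.log 2 * (w - w * Sab) := by ring

/-- Global finite core: the quantitative bound. -/
theorem finCore {T A : Type*} [Fintype T] [Fintype A] [DecidableEq A]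
    (hA : Fintype.card A = 4) (q : T → A → A → ℝ)
    (hq0 : ∀ m x y, 0 ≤ q m x y)
    (hXYu : ∀ x y, ∑ m, q m x y = 1 / 16)
    (hIXY : (∑ m, ∑ x, negMulLog (∑ y, q m x y)) + (∑ m, ∑ y, negMulLog (∑ x, q m x y))
      - (∑ m, ∑ x, ∑ y, negMulLog (q m x y)) - (∑ m, negMulLog (∑ x, ∑ y, q m x y)) ≤ 0)
    (hdX : ∀ m x, q m x x = 0 ∨ q m x x = ∑ y, q m x y)
    (hdY : ∀ m y, q m y y = 0 ∨ q m y y = ∑ x, q m x y) :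
    2 * (∑ m, ∑ x, ∑ y, negMulLog (q m x y)) - (∑ m, ∑ x, negMulLog (∑ y, q m x y))
      - (∑ m, ∑ y, negMulLog (∑ x, q m x y)) ≤ 3 / 2 * Real.log 2 := by
  classical
  -- each per-m Gibbs term is nonnegative, and total is ≤ 0, so each is 0
  set E : T → ℝ := fun m => (∑ x, negMulLog (∑ y, q m x y)) + (∑ y, negMulLog (∑ x, q m x y))
      - (∑ x, ∑ y, negMulLog (q m x y)) - negMulLog (∑ x, ∑ y, q m x y) with hE
  have hEsum : ∑ m, E m ≤ 0 := by
    have : ∑ m, E m = (∑ m, ∑ x, negMulLog (∑ y, q m x y)) + (∑ m, ∑ y, negMulLog (∑ x, q m x y))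
      - (∑ m, ∑ x, ∑ y, negMulLog (q m x y)) - (∑ m, negMulLog (∑ x, ∑ y, q m x y)) := by
      simp only [hE, Finset.sum_add_distrib, Finset.sum_sub_distrib]
    rw [this]; exact hIXY
  have hEnn : ∀ m, 0 ≤ E m := fun m => (gibbs (q m) (hq0 m)).1
  have hEzero : ∀ m, E m = 0 := by
    intro m
    have := (Finset.sum_eq_zero_iff_of_nonneg fun m _ => hEnn m).1
      (le_antisymm hEsum (Finset.sum_nonneg fun m _ => hEnn m)) m (mem_univ m)
    exact this
  have hfac : ∀ m, ∀ x y, q m x y * (∑ x', ∑ y', q m x' y') = (∑ y', q m x y') * (∑ x', q m x' y) :=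
    fun m => (gibbs (q m) (hq0 m)).2 (le_of_eq (hEzero m))
  -- per-m core bound, summed
  have hcore : ∀ m, 2 * (∑ x, ∑ y, negMulLog (q m x y)) - (∑ x, negMulLog (∑ y, q m x y))
      - (∑ y, negMulLog (∑ x, q m x y))
      ≤ 2 * Real.log 2 * ((∑ x, ∑ y, q m x y) - ∑ x, q m x x) := fun m =>
    core hA (q m) (hq0 m) (hfac m) (hdX m) (hdY m)
  have hsum := Finset.sum_le_sum (fun m (_ : m ∈ (univ : Finset T)) => hcore m)
  have hL : ∑ m, (2 * (∑ x, ∑ y, negMulLog (q m x y)) - (∑ x, negMulLog (∑ y, q m x y))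
      - (∑ y, negMulLog (∑ x, q m x y)))
      = 2 * (∑ m, ∑ x, ∑ y, negMulLog (q m x y)) - (∑ m, ∑ x, negMulLog (∑ y, q m x y))
      - (∑ m, ∑ y, negMulLog (∑ x, q m x y)) := by
    simp only [Finset.sum_sub_distrib, Finset.mul_sum]
  have hw1 : ∑ m, ∑ x, ∑ y, q m x y = 1 := by
    rw [Finset.sum_comm]
    have : ∀ x, ∑ m, ∑ y, q m x y = ∑ y, ∑ m, q m x y := fun x => Finset.sum_comm
    simp only [this, hXYu]
    simp [Finset.sum_const, Finset.card_univ, hA]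
    norm_num
  have hdiag1 : ∑ m, ∑ x, q m x x = 1 / 4 := by
    rw [Finset.sum_comm]
    simp only [hXYu]
    simp [Finset.sum_const, Finset.card_univ, hA]
    norm_num
  have hR : ∑ m, 2 * Real.log 2 * ((∑ x, ∑ y, q m x y) - ∑ x, q m x x)
      = 2 * Real.log 2 * (1 - 1/4) := by
    rw [← Finset.mul_sum, Finset.sum_sub_distrib, hw1, hdiag1]
  rw [hL, hR] at hsum
  calc 2 * (∑ m, ∑ x, ∑ y, negMulLog (q m x y)) - (∑ m, ∑ x, negMulLog (∑ y, q m x y))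
      - (∑ m, ∑ y, negMulLog (∑ x, q m x y)) ≤ 2 * Real.log 2 * (1 - 1/4) := hsum
    _ = 3 / 2 * Real.log 2 := by ring


end EqLB
end Lemmas

open EqLB Finset in
/-- 4-ary (two-bit) EQ lower bound: for any finite-valued `M` with `I(X ; Y | M) = 0`,
`H(Z | (M,X)) = 0` and `H(Z | (M,Y)) = 0`, we have
`I(X ; M | Y) + I(Y ; M | X) ≥ (5/2) log 2`. -/
theorem quaternary_EQ_information_cost_lower_bound
    {Ω : Type*} [MeasurableSpace Ω] (μ : Measure Ω) [IsProbabilityMeasure μ]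
    {A : Type*} [Fintype A] [DecidableEq A]
    [MeasurableSpace A] [MeasurableSingletonClass A] (hA : Fintype.card A = 4)
    (X Y : Ω → A) (hX : Measurable X) (hY : Measurable Y)
    (hindep : IndepFun X Y μ)
    (hXunif : ∀ a : A, μ (X ⁻¹' {a}) = (4 : ℝ≥0∞)⁻¹)
    (hYunif : ∀ a : A, μ (Y ⁻¹' {a}) = (4 : ℝ≥0∞)⁻¹)
    (Z : Ω → Fin 2) (hZ : Z = fun ω => if X ω = Y ω then 1 else 0)
    {T : Type*} [Fintype T] [MeasurableSpace T] [MeasurableSingletonClass T]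
    (M : Ω → T) (hM : Measurable M)
    (hXY : condMutInf μ X Y M = 0)
    (hZX : condEnt μ Z (fun ω => (M ω, X ω)) = 0)
    (hZY : condEnt μ Z (fun ω => (M ω, Y ω)) = 0) :
    condMutInf μ X M Y + condMutInf μ Y M X ≥ (5 / 2) * Real.log 2 := by
  classical
  set q : T → A → A → ℝ :=
    fun m x y => (μ (M ⁻¹' {m} ∩ X ⁻¹' {x} ∩ Y ⁻¹' {y})).toReal with hqdef
  have mM : ∀ m : T, MeasurableSet (M ⁻¹' {m}) := fun m => hM (measurableSet_singleton m)
  have mX : ∀ a : A, MeasurableSet (X ⁻¹' {a}) := fun a => hX (measurableSet_singleton a)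
  have mY : ∀ a : A, MeasurableSet (Y ⁻¹' {a}) := fun a => hY (measurableSet_singleton a)
  have hZmeas : Measurable Z := by
    rw [hZ]
    have hs : MeasurableSet {ω | X ω = Y ω} := by
      have : {ω | X ω = Y ω} = ⋃ a : A, X ⁻¹' {a} ∩ Y ⁻¹' {a} := by
        ext ω
        simp only [Set.mem_setOf_eq, Set.mem_iUnion, Set.mem_inter_iff, Set.mem_preimage,
          Set.mem_singleton_iff]
        constructor
        · intro h; exact ⟨X ω, rfl, h.symm⟩
        · rintro ⟨a, h1, h2⟩; rw [h1, h2]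
      rw [this]
      exact MeasurableSet.iUnion fun a => (mX a).inter (mY a)
    exact Measurable.ite hs measurable_const measurable_const
  have mZ : ∀ z : Fin 2, MeasurableSet (Z ⁻¹' {z}) :=
    fun z => hZmeas (measurableSet_singleton z)
  have hq0 : ∀ m x y, 0 ≤ q m x y := fun m x y => ENNReal.toReal_nonneg
  -- marginal identities
  have hq_sum_y : ∀ m x, ∑ y, q m x y = (μ (M ⁻¹' {m} ∩ X ⁻¹' {x})).toReal := by
    intro m x
    have hset : ∀ y : A, M ⁻¹' {m} ∩ X ⁻¹' {x} ∩ Y ⁻¹' {y}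
        = Y ⁻¹' {y} ∩ (M ⁻¹' {m} ∩ X ⁻¹' {x}) := fun y => by
      ext ω; simp only [Set.mem_inter_iff]; tauto
    simp only [hqdef, hset]
    exact sum_fiber μ Y mY _
  have hq_sum_x : ∀ m y, ∑ x, q m x y = (μ (M ⁻¹' {m} ∩ Y ⁻¹' {y})).toReal := by
    intro m y
    have hset : ∀ x : A, M ⁻¹' {m} ∩ X ⁻¹' {x} ∩ Y ⁻¹' {y}
        = X ⁻¹' {x} ∩ (M ⁻¹' {m} ∩ Y ⁻¹' {y}) := fun x => by
      ext ω; simp only [Set.mem_inter_iff]; tauto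
    simp only [hqdef, hset]
    exact sum_fiber μ X mX _
  have hq_sum_xy : ∀ m, ∑ x, ∑ y, q m x y = (μ (M ⁻¹' {m})).toReal := by
    intro m
    simp only [hq_sum_y]
    have hset : ∀ x : A, M ⁻¹' {m} ∩ X ⁻¹' {x} = X ⁻¹' {x} ∩ M ⁻¹' {m} := fun x =>
      Set.inter_comm _ _
    simp only [hset]
    exact sum_fiber μ X mX _
  have hXYval : ∀ x y : A, (μ (X ⁻¹' {x} ∩ Y ⁻¹' {y})).toReal = 1 / 16 := by
    intro x y
    rw [hindep.measure_inter_preimage_eq_mul {x} {y} (measurableSet_singleton x)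
      (measurableSet_singleton y), hXunif, hYunif]
    rw [ENNReal.toReal_mul]
    norm_num
  have hq_sum_m : ∀ x y, ∑ m, q m x y = 1 / 16 := by
    intro x y
    have hset : ∀ m : T, M ⁻¹' {m} ∩ X ⁻¹' {x} ∩ Y ⁻¹' {y}
        = M ⁻¹' {m} ∩ (X ⁻¹' {x} ∩ Y ⁻¹' {y}) := fun m => by rw [Set.inter_assoc]
    simp only [hqdef, hset]
    rw [sum_fiber μ M mM _]
    exact hXYval x y
  -- entropy bridges
  have e_MX : entH μ (fun ω => (M ω, X ω)) = ∑ m, ∑ x, negMulLog (∑ y, q m x y) := by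
    rw [entH, Fintype.sum_prod_type]
    refine Finset.sum_congr rfl fun m _ => Finset.sum_congr rfl fun x _ => ?_
    rw [hq_sum_y m x]
    congr 1
    unfold pm
    congr 2
    ext ω
    simp only [Set.mem_preimage, Set.mem_singleton_iff, Prod.mk.injEq, Set.mem_inter_iff]
    try tauto
  have e_XM : entH μ (fun ω => (X ω, M ω)) = ∑ m, ∑ x, negMulLog (∑ y, q m x y) := by
    rw [entH, Fintype.sum_prod_type, Finset.sum_comm]
    refine Finset.sum_congr rfl fun m _ => Finset.sum_congr rfl fun x _ => ?_
    rw [hq_sum_y m x]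
    congr 1
    unfold pm
    congr 2
    ext ω
    simp only [Set.mem_preimage, Set.mem_singleton_iff, Prod.mk.injEq, Set.mem_inter_iff]
    try tauto
  have e_MY : entH μ (fun ω => (M ω, Y ω)) = ∑ m, ∑ y, negMulLog (∑ x, q m x y) := by
    rw [entH, Fintype.sum_prod_type]
    refine Finset.sum_congr rfl fun m _ => Finset.sum_congr rfl fun y _ => ?_
    rw [hq_sum_x m y]
    congr 1
    unfold pm
    congr 2
    ext ω
    simp only [Set.mem_preimage, Set.mem_singleton_iff, Prod.mk.injEq, Set.mem_inter_iff]
    try tauto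
  have e_YM : entH μ (fun ω => (Y ω, M ω)) = ∑ m, ∑ y, negMulLog (∑ x, q m x y) := by
    rw [entH, Fintype.sum_prod_type, Finset.sum_comm]
    refine Finset.sum_congr rfl fun m _ => Finset.sum_congr rfl fun y _ => ?_
    rw [hq_sum_x m y]
    congr 1
    unfold pm
    congr 2
    ext ω
    simp only [Set.mem_preimage, Set.mem_singleton_iff, Prod.mk.injEq, Set.mem_inter_iff]
    try tauto
  have e_M : entH μ M = ∑ m, negMulLog (∑ x, ∑ y, q m x y) := by
    rw [entH]
    refine Finset.sum_congr rfl fun m _ => ?_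
    rw [hq_sum_xy m]
    rfl
  have e_T3 : entH μ (fun ω => ((X ω, M ω), Y ω)) = ∑ m, ∑ x, ∑ y, negMulLog (q m x y) := by
    rw [entH, Fintype.sum_prod_type, Fintype.sum_prod_type, Finset.sum_comm]
    refine Finset.sum_congr rfl fun m _ => Finset.sum_congr rfl fun x _ =>
      Finset.sum_congr rfl fun y _ => ?_
    simp only [hqdef]
    congr 1
    unfold pm
    congr 2
    ext ω
    simp only [Set.mem_preimage, Set.mem_singleton_iff, Prod.mk.injEq, Set.mem_inter_iff]
    try tauto
  have e_T3' : entH μ (fun ω => ((Y ω, M ω), X ω)) = ∑ m, ∑ x, ∑ y, negMulLog (q m x y) := by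
    rw [entH, Fintype.sum_prod_type, Fintype.sum_prod_type, Finset.sum_comm]
    refine Finset.sum_congr rfl fun m _ => ?_
    rw [Finset.sum_comm]
    refine Finset.sum_congr rfl fun x _ => Finset.sum_congr rfl fun y _ => ?_
    simp only [hqdef]
    congr 1
    unfold pm
    congr 2
    ext ω
    simp only [Set.mem_preimage, Set.mem_singleton_iff, Prod.mk.injEq, Set.mem_inter_iff]
    try tauto
  have e_T3'' : entH μ (fun ω => ((X ω, Y ω), M ω)) = ∑ m, ∑ x, ∑ y, negMulLog (q m x y) := by
    have step : entH μ (fun ω => ((X ω, Y ω), M ω))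
        = ∑ x, ∑ y, ∑ m, negMulLog (q m x y) := by
      rw [entH, Fintype.sum_prod_type, Fintype.sum_prod_type]
      refine Finset.sum_congr rfl fun x _ => Finset.sum_congr rfl fun y _ =>
        Finset.sum_congr rfl fun m _ => ?_
      simp only [hqdef]
      congr 1
      unfold pm
      congr 2
      ext ω
      simp only [Set.mem_preimage, Set.mem_singleton_iff, Prod.mk.injEq, Set.mem_inter_iff]
      try tauto
    rw [step]
    have s1 : ∑ x, ∑ y, ∑ m, negMulLog (q m x y) = ∑ x, ∑ m, ∑ y, negMulLog (q m x y) :=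
      Finset.sum_congr rfl fun x _ => Finset.sum_comm
    rw [s1]
    exact Finset.sum_comm
  have e_XY : entH μ (fun ω => (X ω, Y ω)) = Real.log 16 := by
    have hpm : ∀ p : A × A, pm μ (fun ω => (X ω, Y ω)) p = 1 / 16 := by
      intro p
      have hset : (fun ω => (X ω, Y ω)) ⁻¹' {p} = X ⁻¹' {p.1} ∩ Y ⁻¹' {p.2} := by
        ext ω
        simp only [Set.mem_preimage, Set.mem_singleton_iff, Prod.ext_iff, Set.mem_inter_iff]
      unfold pm
      rw [hset]
      exact hXYval p.1 p.2
    rw [entH]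
    simp only [hpm]
    rw [Finset.sum_const, Finset.card_univ, Fintype.card_prod, hA, nsmul_eq_mul]
    rw [negMulLog, show (1/16 : ℝ) = (16:ℝ)⁻¹ by norm_num, Real.log_inv]
    push_cast
    ring
  have e_YX : entH μ (fun ω => (Y ω, X ω)) = Real.log 16 := by
    have hpm : ∀ p : A × A, pm μ (fun ω => (Y ω, X ω)) p = 1 / 16 := by
      intro p
      have hset : (fun ω => (Y ω, X ω)) ⁻¹' {p} = X ⁻¹' {p.2} ∩ Y ⁻¹' {p.1} := by
        ext ω
        simp only [Set.mem_preimage, Set.mem_singleton_iff, Prod.ext_iff, Set.mem_inter_iff]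
        try tauto
      unfold pm
      rw [hset]
      exact hXYval p.2 p.1
    rw [entH]
    simp only [hpm]
    rw [Finset.sum_const, Finset.card_univ, Fintype.card_prod, hA, nsmul_eq_mul]
    rw [negMulLog, show (1/16 : ℝ) = (16:ℝ)⁻¹ by norm_num, Real.log_inv]
    push_cast
    ring
  have e_X : entH μ X = Real.log 4 := by
    have hpm : ∀ a : A, pm μ X a = 1 / 4 := by
      intro a
      unfold pm
      rw [hXunif a]
      simp [ENNReal.toReal_inv]
    rw [entH]
    simp only [hpm]
    rw [Finset.sum_const, Finset.card_univ, hA, nsmul_eq_mul]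
    rw [negMulLog, show (1/4 : ℝ) = (4:ℝ)⁻¹ by norm_num, Real.log_inv]
    push_cast
    ring
  have e_Y : entH μ Y = Real.log 4 := by
    have hpm : ∀ a : A, pm μ Y a = 1 / 4 := by
      intro a
      unfold pm
      rw [hYunif a]
      simp [ENNReal.toReal_inv]
    rw [entH]
    simp only [hpm]
    rw [Finset.sum_const, Finset.card_univ, hA, nsmul_eq_mul]
    rw [negMulLog, show (1/4 : ℝ) = (4:ℝ)⁻¹ by norm_num, Real.log_inv]
    push_cast
    ring
  -- determinism from hZX
  have hZ1 : ∀ ω, Z ω = 1 ↔ X ω = Y ω := by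
    intro ω
    rw [hZ]
    by_cases h : X ω = Y ω
    · simp only [if_pos h]
      simp [h]
    · simp only [if_neg h]
      constructor
      · intro h0; exact absurd h0 (by decide)
      · intro hc; exact absurd hc h
  have hZfibX : ∀ (z : Fin 2) (m : T) (x : A),
      (fun ω => (Z ω, (M ω, X ω))) ⁻¹' {(z, (m, x))}
      = Z ⁻¹' {z} ∩ (M ⁻¹' {m} ∩ X ⁻¹' {x}) := by
    intro z m x
    ext ω
    simp only [Set.mem_preimage, Set.mem_singleton_iff, Prod.mk.injEq, Set.mem_inter_iff]
    try tauto
  have hsplitX : ∀ (m : T) (x : A),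
      pm μ (fun ω => (Z ω, (M ω, X ω))) (0, (m, x))
      + pm μ (fun ω => (Z ω, (M ω, X ω))) (1, (m, x))
      = (μ (M ⁻¹' {m} ∩ X ⁻¹' {x})).toReal := by
    intro m x
    have h := sum_fiber μ Z mZ (M ⁻¹' {m} ∩ X ⁻¹' {x})
    rw [Fin.sum_univ_two] at h
    unfold pm
    rw [hZfibX 0 m x, hZfibX 1 m x]
    exact h
  have hpm1X : ∀ (m : T) (x : A),
      pm μ (fun ω => (Z ω, (M ω, X ω))) (1, (m, x)) = q m x x := by
    intro m x
    simp only [hqdef]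
    unfold pm
    congr 2
    ext ω
    simp only [Set.mem_preimage, Set.mem_singleton_iff, Prod.mk.injEq, Set.mem_inter_iff, hZ1 ω]
    constructor
    · rintro ⟨hxy, hm, hx⟩; exact ⟨⟨hm, hx⟩, hxy.symm.trans hx⟩
    · rintro ⟨⟨hm, hx⟩, hy⟩; exact ⟨hx.trans hy.symm, hm, hx⟩
  have hcondX : ∑ p : T × A,
      (negMulLog (pm μ (fun ω => (Z ω, (M ω, X ω))) (1, p))
       + negMulLog (pm μ (fun ω => (Z ω, (M ω, X ω))) (0, p))
       - negMulLog (pm μ (fun ω => (Z ω, (M ω, X ω))) (1, p)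
          + pm μ (fun ω => (Z ω, (M ω, X ω))) (0, p))) = 0 := by
    have h1 : entH μ (fun ω => (Z ω, (M ω, X ω)))
        = (∑ p : T × A, negMulLog (pm μ (fun ω => (Z ω, (M ω, X ω))) (0, p)))
          + ∑ p : T × A, negMulLog (pm μ (fun ω => (Z ω, (M ω, X ω))) (1, p)) := by
      rw [entH, Fintype.sum_prod_type, Fin.sum_univ_two]
    have h2 : entH μ (fun ω => (M ω, X ω))
        = ∑ p : T × A, negMulLog (pm μ (fun ω => (Z ω, (M ω, X ω))) (1, p)
            + pm μ (fun ω => (Z ω, (M ω, X ω))) (0, p)) := by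
      rw [entH]
      refine Finset.sum_congr rfl fun p _ => ?_
      obtain ⟨m, x⟩ := p
      have hpmMV : pm μ (fun ω => (M ω, X ω)) (m, x) = (μ (M ⁻¹' {m} ∩ X ⁻¹' {x})).toReal := by
        unfold pm
        congr 2
        ext ω
        simp only [Set.mem_preimage, Set.mem_singleton_iff, Prod.mk.injEq, Set.mem_inter_iff]
      rw [hpmMV, ← hsplitX m x]
      rw [add_comm]
    have h3 : condEnt μ Z (fun ω => (M ω, X ω)) = 0 := hZX
    simp only [condEnt] at h3
    rw [h1, h2] at h3
    rw [Finset.sum_sub_distrib, Finset.sum_add_distrib]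
    linarith [h3]
  have hdetX := extract_det'
    (fun p : T × A => pm μ (fun ω => (Z ω, (M ω, X ω))) (1, p))
    (fun p : T × A => pm μ (fun ω => (Z ω, (M ω, X ω))) (0, p))
    (fun p => ENNReal.toReal_nonneg) (fun p => ENNReal.toReal_nonneg)
    (le_of_eq hcondX)
  have hdX : ∀ m x, q m x x = 0 ∨ q m x x = ∑ y, q m x y := by
    intro m x
    rcases hdetX (m, x) with h | h
    · left
      have h' : pm μ (fun ω => (Z ω, (M ω, X ω))) (1, (m, x)) = 0 := h
      rw [← hpm1X m x]
      exact h'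
    · right
      have h' : pm μ (fun ω => (Z ω, (M ω, X ω))) (0, (m, x)) = 0 := h
      have h4 := hsplitX m x
      rw [h', zero_add, hpm1X m x] at h4
      rw [h4, hq_sum_y m x]
  -- determinism from hZY
  have hZfibY : ∀ (z : Fin 2) (m : T) (y : A),
      (fun ω => (Z ω, (M ω, Y ω))) ⁻¹' {(z, (m, y))}
      = Z ⁻¹' {z} ∩ (M ⁻¹' {m} ∩ Y ⁻¹' {y}) := by
    intro z m y
    ext ω
    simp only [Set.mem_preimage, Set.mem_singleton_iff, Prod.mk.injEq, Set.mem_inter_iff]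
    try tauto
  have hsplitY : ∀ (m : T) (y : A),
      pm μ (fun ω => (Z ω, (M ω, Y ω))) (0, (m, y))
      + pm μ (fun ω => (Z ω, (M ω, Y ω))) (1, (m, y))
      = (μ (M ⁻¹' {m} ∩ Y ⁻¹' {y})).toReal := by
    intro m y
    have h := sum_fiber μ Z mZ (M ⁻¹' {m} ∩ Y ⁻¹' {y})
    rw [Fin.sum_univ_two] at h
    unfold pm
    rw [hZfibY 0 m y, hZfibY 1 m y]
    exact h
  have hpm1Y : ∀ (m : T) (y : A),
      pm μ (fun ω => (Z ω, (M ω, Y ω))) (1, (m, y)) = q m y y := by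
    intro m y
    simp only [hqdef]
    unfold pm
    congr 2
    ext ω
    simp only [Set.mem_preimage, Set.mem_singleton_iff, Prod.mk.injEq, Set.mem_inter_iff, hZ1 ω]
    constructor
    · rintro ⟨hxy, hm, hy⟩; exact ⟨⟨hm, hxy.trans hy⟩, hy⟩
    · rintro ⟨⟨hm, hx⟩, hy⟩; exact ⟨hx.trans hy.symm, hm, hy⟩
  have hcondY : ∑ p : T × A,
      (negMulLog (pm μ (fun ω => (Z ω, (M ω, Y ω))) (1, p))
       + negMulLog (pm μ (fun ω => (Z ω, (M ω, Y ω))) (0, p))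
       - negMulLog (pm μ (fun ω => (Z ω, (M ω, Y ω))) (1, p)
          + pm μ (fun ω => (Z ω, (M ω, Y ω))) (0, p))) = 0 := by
    have h1 : entH μ (fun ω => (Z ω, (M ω, Y ω)))
        = (∑ p : T × A, negMulLog (pm μ (fun ω => (Z ω, (M ω, Y ω))) (0, p)))
          + ∑ p : T × A, negMulLog (pm μ (fun ω => (Z ω, (M ω, Y ω))) (1, p)) := by
      rw [entH, Fintype.sum_prod_type, Fin.sum_univ_two]
    have h2 : entH μ (fun ω => (M ω, Y ω))
        = ∑ p : T × A, negMulLog (pm μ (fun ω => (Z ω, (M ω, Y ω))) (1, p)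
            + pm μ (fun ω => (Z ω, (M ω, Y ω))) (0, p)) := by
      rw [entH]
      refine Finset.sum_congr rfl fun p _ => ?_
      obtain ⟨m, y⟩ := p
      have hpmMV : pm μ (fun ω => (M ω, Y ω)) (m, y) = (μ (M ⁻¹' {m} ∩ Y ⁻¹' {y})).toReal := by
        unfold pm
        congr 2
        ext ω
        simp only [Set.mem_preimage, Set.mem_singleton_iff, Prod.mk.injEq, Set.mem_inter_iff]
      rw [hpmMV, ← hsplitY m y]
      rw [add_comm]
    have h3 : condEnt μ Z (fun ω => (M ω, Y ω)) = 0 := hZY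
    simp only [condEnt] at h3
    rw [h1, h2] at h3
    rw [Finset.sum_sub_distrib, Finset.sum_add_distrib]
    linarith [h3]
  have hdetY := extract_det'
    (fun p : T × A => pm μ (fun ω => (Z ω, (M ω, Y ω))) (1, p))
    (fun p : T × A => pm μ (fun ω => (Z ω, (M ω, Y ω))) (0, p))
    (fun p => ENNReal.toReal_nonneg) (fun p => ENNReal.toReal_nonneg)
    (le_of_eq hcondY)
  have hdY : ∀ m y, q m y y = 0 ∨ q m y y = ∑ x, q m x y := by
    intro m y
    rcases hdetY (m, y) with h | h
    · left
      have h' : pm μ (fun ω => (Z ω, (M ω, Y ω))) (1, (m, y)) = 0 := h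
      rw [← hpm1Y m y]
      exact h'
    · right
      have h' : pm μ (fun ω => (Z ω, (M ω, Y ω))) (0, (m, y)) = 0 := h
      have h4 := hsplitY m y
      rw [h', zero_add, hpm1Y m y] at h4
      rw [h4, hq_sum_x m y]
  -- conditional independence from hXY
  have hIXY : (∑ m, ∑ x, negMulLog (∑ y, q m x y)) + (∑ m, ∑ y, negMulLog (∑ x, q m x y))
      - (∑ m, ∑ x, ∑ y, negMulLog (q m x y)) - (∑ m, negMulLog (∑ x, ∑ y, q m x y)) ≤ 0 := by
    have h := hXY
    simp only [condMutInf] at h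
    rw [e_XM, e_YM, e_T3'', e_M] at h
    linarith [h]
  -- the core bound
  have hfin := finCore hA q hq0 hq_sum_m hIXY hdX hdY
  have l16 : Real.log 16 = 4 * Real.log 2 := by
    rw [show (16:ℝ) = 2^4 by norm_num, Real.log_pow]
    norm_num
  have l4 : Real.log 4 = 2 * Real.log 2 := by
    rw [show (4:ℝ) = 2^2 by norm_num, Real.log_pow]
    norm_num
  simp only [condMutInf]
  rw [e_XY, e_MY, e_T3, e_Y, e_YX, e_MX, e_T3', e_X, l16, l4]
  linarith [hfin]
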